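/- Let q ∈ (0,1), let (ξᵢ)_{i≥0} be i.i.d. Bernoulli(q) random variables, and let (Xᵢ)_{i≥0} be {0,1}-valued random variables, each Bernoulli(1/2), such that Xᵢ = (ξᵢ + X_{i+1}) mod 2 almost surely for all i ≥ 0, with X_{i+1} independent of (ξ₀,…,ξᵢ) for each i. Then X₀ is independent of the σ-algebra σ(ξ₀, ξ₁, ξ₂, …). -/

import Mathlib

open MeasureTheory ProbabilityTheory

/-- The Bernoulli(`p`) measure on `ZMod 2`: mass `p` at `1` and `1 - p` at `0`. -/
noncomputable def bernoulliZMod2 (p : ℝ) : Measure (ZMod 2) :=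
  ENNReal.ofReal p • Measure.dirac 1 + ENNReal.ofReal (1 - p) • Measure.dirac 0

lemma zmod2_cases (x : ZMod 2) : x = 0 ∨ x = 1 := by revert x; decide

lemma set_zmod2 (B : Set (ZMod 2)) : B = ∅ ∨ B = {0} ∨ B = {1} ∨ B = Set.univ := by
  by_cases h0 : (0:ZMod 2) ∈ B <;> by_cases h1 : (1:ZMod 2) ∈ B
  · right; right; right; ext x; rcases zmod2_cases x with h|h <;> simp [h, h0, h1]
  · right; left; ext x; rcases zmod2_cases x with h|h <;> simp [h, h0, h1]
  · right; right; left; ext x; rcases zmod2_cases x with h|h <;> simp [h, h0, h1]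
  · left; ext x; rcases zmod2_cases x with h|h <;> simp [h, h0, h1]

lemma zmod2_add_iff (a b c : ZMod 2) :
    a + b = c ↔ ((b = 0 ∧ a = c) ∨ (b = 1 ∧ a = c + 1)) := by revert a b c; decide

lemma zmod2_total (x c : ZMod 2) : x = c ∨ x = c + 1 := by revert x c; decide

lemma zmod2_ne_add_one (c : ZMod 2) : c ≠ c + 1 := by revert c; decide

/-- For the mod-2 addition RDE, the root variable `X₀` of the associated RTP is
independent of the innovation σ-algebra `σ(ξ₀, ξ₁, …)`. -/
theorem stmt_4 {Ω : Type*} {F : MeasurableSpace Ω} (P : Measure Ω) [IsProbabilityMeasure P]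
    (q : ℝ) (hq : q ∈ Set.Ioo (0:ℝ) 1)
    (ξ X : ℕ → Ω → ZMod 2)
    (hξmeas : ∀ i, Measurable (ξ i)) (hXmeas : ∀ i, Measurable (X i))
    (hξiid : iIndepFun ξ P)
    (hξdist : ∀ i, Measure.map (ξ i) P = bernoulliZMod2 q)
    (hXdist : ∀ i, Measure.map (X i) P = bernoulliZMod2 (1/2))
    (hrec : ∀ i, X i =ᵐ[P] fun ω => ξ i ω + X (i+1) ω)
    (hindep : ∀ i, Indep (MeasurableSpace.comap (X (i+1)) inferInstance)
      (⨆ j ∈ Set.Iic i, MeasurableSpace.comap (ξ j) inferInstance) P) :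
    Indep (MeasurableSpace.comap (X 0) inferInstance)
      (⨆ j, MeasurableSpace.comap (ξ j) inferInstance) P := by
  classical
  set G : ℕ → MeasurableSpace Ω :=
    fun i => ⨆ j ∈ Set.Iic i, MeasurableSpace.comap (ξ j) inferInstance with hGdef
  have hcomap_le : ∀ j, MeasurableSpace.comap (ξ j) inferInstance ≤ F :=
    fun j => (hξmeas j).comap_le
  have hGle : ∀ i, G i ≤ F := fun i => iSup₂_le fun j _ => hcomap_le j
  have hGmono : Monotone G := fun i i' h =>
    biSup_mono (fun j (hj : j ≤ i) => le_trans hj h)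
  have hξG : ∀ {j i : ℕ}, j ≤ i → Measurable[G i] (ξ j) := by
    intro j i hj
    have h1 : Measurable[MeasurableSpace.comap (ξ j) inferInstance] (ξ j) :=
      Measurable.of_comap_le le_rfl
    exact h1.mono (le_iSup₂ (f := fun j (_ : j ∈ Set.Iic i) =>
      MeasurableSpace.comap (ξ j) inferInstance) j hj) le_rfl
  -- P(X k = c) = 1/2
  have hhalf : ∀ k (c : ZMod 2), P (X k ⁻¹' {c}) = ENNReal.ofReal (1/2) := by
    intro k c
    rw [← Measure.map_apply (hXmeas k) (measurableSet_singleton c), hXdist k]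
    rcases zmod2_cases c with hc | hc <;>
      simp [bernoulliZMod2, hc, Measure.dirac_apply] <;> norm_num <;> rw [one_div, ENNReal.ofReal_inv_of_pos (by norm_num)] <;> simp
  -- independence of X (i+1) from G i, applied to singletons
  have hY : ∀ i (d : ZMod 2) (C : Set Ω), MeasurableSet[G i] C →
      P (X (i+1) ⁻¹' {d} ∩ C) = ENNReal.ofReal (1/2) * P C := by
    intro i d C hC
    have h := (Indep_iff _ _ P).mp (hindep i) (X (i+1) ⁻¹' {d}) C
      ⟨{d}, measurableSet_singleton d, rfl⟩ hC
    rw [h, hhalf (i+1) d]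
  -- decomposition of X 0
  have hdecomp : ∀ i, ∃ S : Ω → ZMod 2, Measurable[G i] S ∧
      X 0 =ᵐ[P] fun ω => S ω + X (i+1) ω := by
    intro i
    induction i with
    | zero => exact ⟨ξ 0, hξG le_rfl, hrec 0⟩
    | succ i ih =>
      obtain ⟨S, hS, hX⟩ := ih
      refine ⟨fun ω => S ω + ξ (i+1) ω,
        (hS.mono (hGmono i.le_succ) le_rfl).add (hξG le_rfl), ?_⟩
      filter_upwards [hX, hrec (i+1)] with ω h1 h2
      rw [h1, h2]
      exact (add_assoc _ _ _).symm
  -- key: independence from each G i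
  have key : ∀ i, Indep (MeasurableSpace.comap (X 0) inferInstance) (G i) P := by
    intro i
    rw [Indep_iff]
    rintro t1 t2 ⟨B, -, rfl⟩ ht2
    obtain ⟨S, hSmeas, hXae⟩ := hdecomp i
    have ht2F : MeasurableSet t2 := hGle i _ ht2
    have hsingle : ∀ c : ZMod 2,
        P (X 0 ⁻¹' {c} ∩ t2) = P (X 0 ⁻¹' {c}) * P t2 := by
      intro c
      have hset : (X 0 ⁻¹' {c} ∩ t2 : Set Ω)
          =ᵐ[P] (((fun ω => S ω + X (i+1) ω) ⁻¹' {c} ∩ t2 : Set Ω) : Set Ω) := by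
        filter_upwards [hXae] with ω h
        change (X 0 ω = c ∧ t2 ω) = (S ω + X (i+1) ω = c ∧ t2 ω)
        rw [h]
      rw [measure_congr hset, hhalf 0 c]
      have hdec : ((fun ω => S ω + X (i+1) ω) ⁻¹' {c} ∩ t2 : Set Ω) =
          (X (i+1) ⁻¹' {0} ∩ (S ⁻¹' {c} ∩ t2)) ∪
          (X (i+1) ⁻¹' {1} ∩ (S ⁻¹' {c+1} ∩ t2)) := by
        ext ω
        simp only [Set.mem_inter_iff, Set.mem_union, Set.mem_preimage,
          Set.mem_singleton_iff]
        rw [zmod2_add_iff (S ω) (X (i+1) ω) c]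
        tauto
      have hC0 : MeasurableSet[G i] (S ⁻¹' {c} ∩ t2) :=
        (hSmeas (measurableSet_singleton c)).inter ht2
      have hC1 : MeasurableSet[G i] (S ⁻¹' {c+1} ∩ t2) :=
        (hSmeas (measurableSet_singleton (c+1))).inter ht2
      have hdisj : Disjoint (X (i+1) ⁻¹' {0} ∩ (S ⁻¹' {c} ∩ t2))
          (X (i+1) ⁻¹' {1} ∩ (S ⁻¹' {c+1} ∩ t2)) := by
        refine Set.disjoint_left.mpr ?_
        rintro ω ⟨h0, -⟩ ⟨h1, -⟩
        simp only [Set.mem_preimage, Set.mem_singleton_iff] at h0 h1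
        rw [h0] at h1; exact (by decide : (0 : ZMod 2) ≠ 1) h1
      have hmeas1 : MeasurableSet (X (i+1) ⁻¹' {1} ∩ (S ⁻¹' {c+1} ∩ t2)) :=
        ((hXmeas (i+1)) (measurableSet_singleton 1)).inter (hGle i _ hC1)
      rw [hdec, measure_union hdisj hmeas1, hY i 0 _ hC0, hY i 1 _ hC1,
        ← mul_add]
      congr 1
      have hdisj2 : Disjoint (S ⁻¹' {c} ∩ t2) (S ⁻¹' {c+1} ∩ t2) := by
        refine Set.disjoint_left.mpr ?_
        rintro ω ⟨h0, -⟩ ⟨h1, -⟩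
        simp only [Set.mem_preimage, Set.mem_singleton_iff] at h0 h1
        rw [h0] at h1
        exact zmod2_ne_add_one c h1
      rw [← measure_union hdisj2 (hGle i _ hC1)]
      congr 1
      ext ω
      simp only [Set.mem_union, Set.mem_inter_iff, Set.mem_preimage,
        Set.mem_singleton_iff]
      rcases zmod2_total (S ω) c with h | h <;> tauto
    rcases set_zmod2 B with hB | hB | hB | hB <;> subst hB
    · simp
    · exact hsingle 0
    · exact hsingle 1
    · simp [measure_univ]
  have hsup : (⨆ j, MeasurableSpace.comap (ξ j) inferInstance : MeasurableSpace Ω)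
      = ⨆ i, G i := by
    apply le_antisymm
    · refine iSup_le fun j => ?_
      exact le_trans (le_iSup₂ (f := fun k (_ : k ∈ Set.Iic j) =>
        MeasurableSpace.comap (ξ k) inferInstance) j (Set.mem_Iic.mpr le_rfl)) (le_iSup G j)
    · exact iSup_le fun i => iSup₂_le fun j _ =>
        le_iSup (fun k => MeasurableSpace.comap (ξ k) inferInstance) j
  rw [hsup]
  exact (indep_iSup_of_monotone (fun i => (key i).symm) hGle
    ((hXmeas 0).comap_le) hGmono).symm
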